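/- For every integer P≥2, every spooky pebbling strategy on the grid DAG G◇_P has pebbling cost at least P+1. -/

import Mathlib

variable {V : Type*}

/-- The set of roots (vertices with out-degree 0) of the graph with edge relation `E`. -/
noncomputable def rootFinset [Finite V] (E : V → V → Prop) : Finset V :=
  (Set.toFinite {v | ∀ w, ¬ E v w}).toFinset

/-- One move of the irreversible pebble game: pebble a vertex whose direct
predecessors are all pebbled, or unpebble any vertex. -/
def IrrevStep [DecidableEq V] (E : V → V → Prop) (A B : Finset V) : Prop :=
  ∃ v : V, (B = insert v A ∧ ∀ w, E w v → w ∈ A) ∨ B = A.erase v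

/-- An irreversible pebbling strategy with pebbling time `T`. -/
def IsIrrevStrategy [Finite V] [DecidableEq V] (E : V → V → Prop)
    (P : ℕ → Finset V) (T : ℕ) : Prop :=
  P 0 = ∅ ∧ P T = rootFinset E ∧
    ∀ t, 1 ≤ t → t ≤ T → IrrevStep E (P (t - 1)) (P t)

/-- One move of the spooky pebble game: pebble, unpebble, ghost or unghost. -/
def SpookyStep [DecidableEq V] (E : V → V → Prop) (A B SA SB : Finset V) : Prop :=
  ∃ v : V,
    (B = insert v A ∧ SB = SA ∧ ∀ w, E w v → w ∈ A) ∨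
    (B = A.erase v ∧ SB = SA ∧ ∀ w, E w v → w ∈ A) ∨
    (B = A.erase v ∧ SB = insert v SA) ∨
    (B = insert v A ∧ SB = SA.erase v ∧ ∀ w, E w v → w ∈ A)

/-- A spooky pebbling sub-strategy: the move rules hold, with no boundary conditions. -/
def IsSpookySubStrategy [DecidableEq V] (E : V → V → Prop)
    (P S : ℕ → Finset V) (T : ℕ) : Prop :=
  ∀ t, 1 ≤ t → t ≤ T → SpookyStep E (P (t - 1)) (P t) (S (t - 1)) (S t)

/-- A spooky pebbling strategy with pebbling time `T`. -/
def IsSpookyStrategy [Finite V] [DecidableEq V] (E : V → V → Prop)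
    (P S : ℕ → Finset V) (T : ℕ) : Prop :=
  P 0 = ∅ ∧ S 0 = ∅ ∧ P T = rootFinset E ∧ S T = ∅ ∧
    IsSpookySubStrategy E P S T

/-- The pebbling cost of a strategy of time `T`: the maximal number of pebbles used. -/
def pebCost (P : ℕ → Finset V) (T : ℕ) : ℕ :=
  (Finset.range (T + 1)).sup fun t => (P t).card

/-- The ghosting cost of a spooky strategy of time `T`: the maximal number of ghosts used. -/
def ghostCost (S : ℕ → Finset V) (T : ℕ) : ℕ :=
  (Finset.range (T + 1)).sup fun t => (S t).card

/-- Acyclicity of the edge relation: no directed cycles. -/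
def Acyclic (E : V → V → Prop) : Prop := ∀ v, ¬ Relation.TransGen E v v

/-- The grid DAG `G◇_P` on vertex set `Fin P × Fin P` (0-indexed, so the leaf “(1,1)”
is `(0,0)` and the root “(P,P)” is `(P-1,P-1)`), with edges `(i,j)→(i+1,j)` and
`(i,j)→(i,j+1)`. -/
def gridE (P : ℕ) (a b : Fin P × Fin P) : Prop :=
  ((b.1 : ℕ) = (a.1 : ℕ) + 1 ∧ b.2 = a.2) ∨
  (b.1 = a.1 ∧ (b.2 : ℕ) = (a.2 : ℕ) + 1)

namespace GridProof

instance (P : ℕ) (a b : Fin P × Fin P) : Decidable (gridE P a b) := by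
  unfold gridE; infer_instance

variable {P : ℕ}

def lev (u : Fin P × Fin P) : ℕ := (u.1 : ℕ) + (u.2 : ℕ)

lemma lev_le (u : Fin P × Fin P) : lev u ≤ 2 * P - 2 := by
  have h1 := u.1.isLt; have h2 := u.2.isLt
  unfold lev; omega

lemma lev_succ {u s : Fin P × Fin P} (h : gridE P u s) : lev s = lev u + 1 := by
  unfold lev
  rcases h with ⟨h1, h2⟩ | ⟨h1, h2⟩
  · have : (s.2 : ℕ) = (u.2 : ℕ) := by rw [h2]
    omega
  · have : (s.1 : ℕ) = (u.1 : ℕ) := by rw [h1]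
    omega

lemma exists_succ {u : Fin P × Fin P} (h : lev u < 2 * P - 2) :
    ∃ s, gridE P u s := by
  have h1 := u.1.isLt; have h2 := u.2.isLt
  by_cases hc : (u.1 : ℕ) + 1 < P
  · exact ⟨(⟨(u.1 : ℕ) + 1, hc⟩, u.2), Or.inl ⟨rfl, rfl⟩⟩
  · have hc2 : (u.2 : ℕ) + 1 < P := by unfold lev at h; omega
    exact ⟨(u.1, ⟨(u.2 : ℕ) + 1, hc2⟩), Or.inr ⟨rfl, rfl⟩⟩

def colev (u : Fin P × Fin P) : ℕ := 2 * P - 2 - lev u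

def succs (u : Fin P × Fin P) : Finset (Fin P × Fin P) :=
  Finset.univ.filter (fun s => gridE P u s)

lemma mem_succs {u s : Fin P × Fin P} : s ∈ succs u ↔ gridE P u s := by
  simp [succs]

lemma succs_nonempty {u : Fin P × Fin P} (h : lev u < 2 * P - 2) :
    (succs u).Nonempty := by
  obtain ⟨s, hs⟩ := exists_succ h
  exact ⟨s, mem_succs.mpr hs⟩

variable (T : ℕ) (Pf : ℕ → Finset (Fin P × Fin P))

noncomputable def theta : Fin P × Fin P → ℕ := fun u =>
  Nat.findGreatest (fun s => u ∈ Pf s ∧ u ∉ Pf (s - 1))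
    ((if h : (succs u).Nonempty then
        (succs u).attach.sup (fun s => theta s.1) else T + 1) - 1)
termination_by u => colev u
decreasing_by
  · have hs := s.2
    simp only [succs, Finset.mem_filter] at hs
    have hl := lev_succ hs.2
    have := lev_le s.1
    unfold colev
    omega

noncomputable def Hb (u : Fin P × Fin P) : ℕ :=
  if (succs u).Nonempty then (succs u).sup (theta T Pf) else T + 1

lemma theta_eq (u : Fin P × Fin P) :
    theta T Pf u = Nat.findGreatest (fun s => u ∈ Pf s ∧ u ∉ Pf (s - 1)) (Hb T Pf u - 1) := by
  rw [theta, Hb]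
  congr 1
  split_ifs with h
  · rw [Finset.sup_attach]
  · rfl

/- ====== hypotheses-based development ====== -/
variable (h0 : Pf 0 = ∅)
  (hroot : ∀ u : Fin P × Fin P, lev u = 2 * P - 2 → u ∈ Pf T)
  (hins : ∀ t (u : Fin P × Fin P), 1 ≤ t → t ≤ T → u ∈ Pf t → u ∉ Pf (t - 1) →
    (∀ p, gridE P p u → p ∈ Pf (t - 1)) ∧ Pf t = insert u (Pf (t - 1)))

include h0 in
lemma exists_ins {u : Fin P × Fin P} :
    ∀ r, u ∈ Pf r → ∃ s, s ≤ r ∧ u ∈ Pf s ∧ u ∉ Pf (s - 1) := by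
  intro r
  induction r with
  | zero => intro h; rw [h0] at h; exact absurd h (Finset.notMem_empty u)
  | succ n ih =>
    intro h
    by_cases hn : u ∈ Pf n
    · obtain ⟨s, hs, h2⟩ := ih hn
      exact ⟨s, by omega, h2⟩
    · exact ⟨n + 1, le_refl _, h, by simpa using hn⟩

include h0 hroot hins in
/-- The main bundle of facts about `theta`, proved by strong induction on colevel. -/
lemma theta_bundle (u : Fin P × Fin P) :
    1 ≤ theta T Pf u ∧ theta T Pf u + 1 ≤ Hb T Pf u ∧ Hb T Pf u ≤ T + 1 ∧
    u ∈ Pf (theta T Pf u) ∧ u ∉ Pf (theta T Pf u - 1) ∧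
    (∀ r, theta T Pf u ≤ r → r + 1 ≤ Hb T Pf u → u ∈ Pf r) := by
  -- strong induction on colev
  generalize hn : colev u = n
  induction n using Nat.strong_induction_on generalizing u with
  | _ n ih =>
  subst hn
  -- step 1: u ∈ Pf (Hb u - 1) and Hb u ≤ T + 1 and 1 ≤ Hb u
  have key : u ∈ Pf (Hb T Pf u - 1) ∧ Hb T Pf u ≤ T + 1 ∧ 1 ≤ Hb T Pf u := by
    by_cases hr : lev u = 2 * P - 2
    · have : ¬ (succs u).Nonempty := by
        rintro ⟨s, hs⟩
        have := lev_succ (mem_succs.mp hs)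
        have := lev_le s
        omega
      unfold Hb
      rw [if_neg this]
      simp only [Nat.add_sub_cancel]
      exact ⟨hroot u hr, le_refl _, by omega⟩
    · have hlt : lev u < 2 * P - 2 := lt_of_le_of_ne (lev_le u) hr
      have hne := succs_nonempty hlt
      obtain ⟨s, hsmem, hsup⟩ := Finset.exists_mem_eq_sup (succs u) hne (theta T Pf)
      have hE : gridE P u s := mem_succs.mp hsmem
      have hcol : colev s < colev u := by
        have := lev_succ hE
        have := lev_le s
        unfold colev; omega
      obtain ⟨hs1, hs2, hs3, hs4, hs5, _⟩ := ih (colev s) hcol s rfl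
      have hHu : Hb T Pf u = theta T Pf s := by
        unfold Hb; rw [if_pos hne]; exact hsup
      have hsT : theta T Pf s ≤ T := by omega
      have := (hins (theta T Pf s) s hs1 hsT hs4 hs5).1 u hE
      rw [hHu]
      exact ⟨this, by omega, by omega⟩
  obtain ⟨kmem, hHT, hH1⟩ := key
  -- step 2: θ u facts from findGreatest
  obtain ⟨s₀, hs₀le, hQ₀⟩ := exists_ins (Pf := Pf) h0 (Hb T Pf u - 1) kmem
  have hspec : u ∈ Pf (theta T Pf u) ∧ u ∉ Pf (theta T Pf u - 1) := by
    rw [theta_eq]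
    exact Nat.findGreatest_spec (P := fun s => u ∈ Pf s ∧ u ∉ Pf (s - 1)) hs₀le hQ₀
  have hle : theta T Pf u ≤ Hb T Pf u - 1 := by
    rw [theta_eq]
    exact Nat.findGreatest_le (P := fun s => u ∈ Pf s ∧ u ∉ Pf (s - 1)) _
  have h1 : 1 ≤ theta T Pf u := by
    by_contra h
    have h0' : theta T Pf u = 0 := by omega
    have := hspec.1
    rw [h0', h0] at this
    exact Finset.notMem_empty u this
  refine ⟨h1, by omega, hHT, hspec.1, hspec.2, ?_⟩
  -- presence on [θ u, Hb u - 1]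
  have main : ∀ k r, r + k = Hb T Pf u - 1 → theta T Pf u ≤ r → u ∈ Pf r := by
    intro k
    induction k with
    | zero =>
      intro r hr _
      have : r = Hb T Pf u - 1 := by omega
      rwa [this]
    | succ m ihm =>
      intro r hr hθ
      by_contra hnot
      have hmem : u ∈ Pf (r + 1) := ihm (r + 1) (by omega) (by omega)
      have hQ : u ∈ Pf (r + 1) ∧ u ∉ Pf ((r + 1) - 1) := ⟨hmem, by simpa using hnot⟩
      have hgt : theta T Pf u < r + 1 := by omega
      rw [theta_eq] at hgt
      have hbnd : r + 1 ≤ Hb T Pf u - 1 := by omega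
      exact Nat.findGreatest_is_greatest hgt hbnd hQ
  intro r hθr hrH
  exact main (Hb T Pf u - 1 - r) r (by omega) hθr

/- ====== predecessor constructions ====== -/

def leftp (c : Fin P × Fin P) : Fin P × Fin P :=
  (c.1, ⟨(c.2 : ℕ) - 1, Nat.lt_of_le_of_lt (Nat.sub_le _ _) c.2.isLt⟩)

def downp (c : Fin P × Fin P) : Fin P × Fin P :=
  (⟨(c.1 : ℕ) - 1, Nat.lt_of_le_of_lt (Nat.sub_le _ _) c.1.isLt⟩, c.2)

lemma gridE_leftp {c : Fin P × Fin P} (h : 1 ≤ (c.2 : ℕ)) : gridE P (leftp c) c := by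
  right
  refine ⟨rfl, ?_⟩
  show (c.2 : ℕ) = (c.2 : ℕ) - 1 + 1
  omega

lemma gridE_downp {c : Fin P × Fin P} (h : 1 ≤ (c.1 : ℕ)) : gridE P (downp c) c := by
  left
  refine ⟨?_, rfl⟩
  show (c.1 : ℕ) = (c.1 : ℕ) - 1 + 1
  omega

/- ====== the C and G sets ====== -/

noncomputable def Cset (t ℓ : ℕ) : Finset (Fin P × Fin P) :=
  Finset.univ.filter (fun c => lev c = ℓ ∧ t < theta T Pf c)

noncomputable def Gset (t ℓ : ℕ) : Finset (Fin P × Fin P) :=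
  Finset.univ.filter (fun u => lev u = ℓ ∧ theta T Pf u ≤ t ∧
    ∃ s, gridE P u s ∧ t < theta T Pf s)

lemma mem_Cset {t ℓ : ℕ} {c : Fin P × Fin P} :
    c ∈ Cset T Pf t ℓ ↔ lev c = ℓ ∧ t < theta T Pf c := by
  simp [Cset]

lemma mem_Gset {t ℓ : ℕ} {u : Fin P × Fin P} :
    u ∈ Gset T Pf t ℓ ↔ lev u = ℓ ∧ theta T Pf u ≤ t ∧
      ∃ s, gridE P u s ∧ t < theta T Pf s := by
  simp [Gset]

lemma theta_le_Hb {u s : Fin P × Fin P} (h : gridE P u s) :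
    theta T Pf s ≤ Hb T Pf u := by
  unfold Hb
  rw [if_pos ⟨s, mem_succs.mpr h⟩]
  exact Finset.le_sup (mem_succs.mpr h)

include h0 hroot hins in
lemma Gset_subset_Pf {t ℓ : ℕ} {u : Fin P × Fin P} (hu : u ∈ Gset T Pf t ℓ) :
    u ∈ Pf t := by
  rw [mem_Gset T Pf] at hu
  obtain ⟨-, hθ, s, hE, hs⟩ := hu
  obtain ⟨-, -, -, -, -, hpres⟩ := theta_bundle T Pf h0 hroot hins u
  refine hpres t hθ ?_
  have := theta_le_Hb T Pf hE
  omega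

include h0 hroot hins in
/-- achiever of the deadline: a successor with `theta` equal to `Hb`. -/
lemma exists_sup_succ {u : Fin P × Fin P} (h : lev u < 2 * P - 2) :
    ∃ s, gridE P u s ∧ theta T Pf u < theta T Pf s := by
  have hne := succs_nonempty h
  obtain ⟨s, hsmem, hsup⟩ := Finset.exists_mem_eq_sup (succs u) hne (theta T Pf)
  refine ⟨s, mem_succs.mp hsmem, ?_⟩
  obtain ⟨-, h2, -, -, -, -⟩ := theta_bundle T Pf h0 hroot hins u
  have : Hb T Pf u = theta T Pf s := by
    unfold Hb; rw [if_pos hne]; exact hsup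
  omega

/- ====== the key level-counting lemma ====== -/

set_option linter.unusedSectionVars false in
lemma key_count (hP : 2 ≤ P) {t ℓ : ℕ} (hl : P - 1 ≤ ℓ) (hl2 : ℓ + 1 ≤ 2 * P - 2)
    (hne : (Cset T Pf t (ℓ + 1)).Nonempty) :
    (Cset T Pf t (ℓ + 1)).card + 1 ≤ (Gset T Pf t ℓ).card + (Cset T Pf t ℓ).card := by
  classical
  set S := Cset T Pf t (ℓ + 1) with hS
  -- coordinates of members are ≥ 1
  have hco : ∀ c ∈ S, 1 ≤ (c.1 : ℕ) ∧ 1 ≤ (c.2 : ℕ) := by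
    intro c hc
    rw [hS, mem_Cset] at hc
    have h1 := c.1.isLt; have h2 := c.2.isLt
    have := hc.1
    unfold lev at this
    omega
  -- the image under leftp
  have hinj : Set.InjOn leftp (S : Set (Fin P × Fin P)) := by
    intro c hc c' hc' he
    have h1 : c.1 = c'.1 := (Prod.ext_iff.mp he).1
    have h2 : ((c.2 : ℕ) - 1 : ℕ) = ((c'.2 : ℕ) - 1 : ℕ) :=
      congrArg Fin.val (Prod.ext_iff.mp he).2
    have hc2 := (hco c hc).2
    have hc'2 := (hco c' hc').2
    have : (c.2 : ℕ) = (c'.2 : ℕ) := by omega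
    exact Prod.ext h1 (Fin.ext this)
  have hcardim : (S.image leftp).card = S.card := Finset.card_image_of_injOn hinj
  -- min row element
  have hRne : (S.image (fun c => (c.1 : ℕ))).Nonempty := hne.image _
  set imin := (S.image (fun c => (c.1 : ℕ))).min' hRne with himin
  obtain ⟨cmin, hcminS, hcmin⟩ := Finset.mem_image.mp
    (Finset.min'_mem (S.image (fun c => (c.1 : ℕ))) hRne)
  set dm := downp cmin with hdm
  have hdmrow : (dm.1 : ℕ) = imin - 1 := by rw [hdm, himin, ← hcmin]; rfl
  have himin1 : 1 ≤ imin := by rw [himin, ← hcmin]; exact (hco cmin hcminS).1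
  have hdmnot : dm ∉ S.image leftp := by
    intro hmem
    obtain ⟨c, hcS, hcq⟩ := Finset.mem_image.mp hmem
    have : (c.1 : ℕ) = (dm.1 : ℕ) := by rw [← hcq]; rfl
    have hge : imin ≤ (c.1 : ℕ) := Finset.min'_le _ _ (Finset.mem_image_of_mem _ hcS)
    omega
  -- every element of insert dm (S.image leftp) is in Gset ∪ Cset at level ℓ
  have hsub : insert dm (S.image leftp) ⊆ Gset T Pf t ℓ ∪ Cset T Pf t ℓ := by
    intro p hp
    have hpred : ∃ c ∈ S, gridE P p c := by
      rcases Finset.mem_insert.mp hp with h | h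
      · exact ⟨cmin, hcminS, by rw [h, hdm]; exact gridE_downp (by omega)⟩
      · obtain ⟨c, hcS, hcq⟩ := Finset.mem_image.mp h
        exact ⟨c, hcS, by rw [← hcq]; exact gridE_leftp (hco c hcS).2⟩
    obtain ⟨c, hcS, hE⟩ := hpred
    have hlevc : lev c = ℓ + 1 := ((mem_Cset T Pf).mp hcS).1
    have hθc : t < theta T Pf c := ((mem_Cset T Pf).mp hcS).2
    have hlevp : lev p = ℓ := by
      have := lev_succ hE
      omega
    by_cases hcase : t < theta T Pf p
    · exact Finset.mem_union_right _ ((mem_Cset T Pf).mpr ⟨hlevp, hcase⟩)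
    · exact Finset.mem_union_left _ ((mem_Gset T Pf).mpr ⟨hlevp, by omega, c, hE, hθc⟩)
  calc S.card + 1 = (insert dm (S.image leftp)).card := by
        rw [Finset.card_insert_of_notMem hdmnot, hcardim]
    _ ≤ (Gset T Pf t ℓ ∪ Cset T Pf t ℓ).card := Finset.card_le_card hsub
    _ ≤ (Gset T Pf t ℓ).card + (Cset T Pf t ℓ).card := Finset.card_union_le _ _

/- ====== the core theorem ====== -/

include h0 hroot hins in
lemma core (hP : 2 ≤ P) : ∃ t, t ≤ T ∧ P + 1 ≤ (Pf t).card := by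
  classical
  -- the main anti-diagonal and its theta-maximal element w
  have hDne : (Finset.univ.filter (fun u : Fin P × Fin P => lev u = P - 1)).Nonempty := by
    refine ⟨(⟨P - 1, by omega⟩, ⟨0, by omega⟩), ?_⟩
    exact Finset.mem_filter.mpr ⟨Finset.mem_univ _, by simp [lev]⟩
  obtain ⟨w, hwD, hwmax⟩ := Finset.exists_max_image
    (Finset.univ.filter (fun u : Fin P × Fin P => lev u = P - 1)) (theta T Pf) hDne
  have hwlev : lev w = P - 1 := (Finset.mem_filter.mp hwD).2
  set t := theta T Pf w with ht
  -- bundle facts for w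
  obtain ⟨hw1, hw2, hw3, hw4, hw5, -⟩ := theta_bundle T Pf h0 hroot hins w
  have htT : t ≤ T := by omega
  -- CLAIM 1 : anything with theta > t lives at level ≥ P
  have claim1 : ∀ n (u : Fin P × Fin P), colev u = n → t < theta T Pf u → P ≤ lev u := by
    intro n
    induction n using Nat.strong_induction_on with
    | _ n ih =>
    intro u hn hu
    by_cases hr : lev u = 2 * P - 2
    · omega
    · have hlt : lev u < 2 * P - 2 := lt_of_le_of_ne (lev_le u) hr
      obtain ⟨s, hE, hθs⟩ := exists_sup_succ T Pf h0 hroot hins hlt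
      have hcol : colev s < colev u := by
        have := lev_succ hE
        have := lev_le s
        unfold colev; omega
      have hPs : P ≤ lev s := ih (colev s) (by omega) s rfl (by omega)
      have hlev : lev s = lev u + 1 := lev_succ hE
      -- if lev u = P - 1 then u is on the diagonal, so theta u ≤ t, contradiction
      by_cases hd : lev u = P - 1
      · have : u ∈ Finset.univ.filter (fun u : Fin P × Fin P => lev u = P - 1) := by
          simp [hd]
        have := hwmax u this
        omega
      · omega
  -- CLAIM 2 : every level from P to 2P-2 contains an element with theta > t
  have claim2 : ∀ ℓ, P ≤ ℓ → ℓ ≤ 2 * P - 2 → (Cset T Pf t ℓ).Nonempty := by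
    intro ℓ hℓ
    induction ℓ, hℓ using Nat.le_induction with
    | base =>
      intro _
      have hlt : lev w < 2 * P - 2 := by omega
      obtain ⟨s, hE, hθs⟩ := exists_sup_succ T Pf h0 hroot hins hlt
      refine ⟨s, (mem_Cset T Pf).mpr ⟨?_, by omega⟩⟩
      rw [lev_succ hE, hwlev]
      omega
    | succ ℓ hℓ ihl =>
      intro h2
      obtain ⟨c, hc⟩ := ihl (by omega)
      rw [mem_Cset T Pf] at hc
      have hlt : lev c < 2 * P - 2 := by omega
      obtain ⟨s, hE, hθs⟩ := exists_sup_succ T Pf h0 hroot hins hlt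
      refine ⟨s, (mem_Cset T Pf).mpr ⟨?_, by omega⟩⟩
      rw [lev_succ hE, hc.1]
  -- Cset at level P-1 is empty
  have hC0 : (Cset T Pf t (P - 1)).card = 0 := by
    rw [Finset.card_eq_zero]
    rw [Finset.eq_empty_iff_forall_notMem]
    intro c hc
    rw [mem_Cset T Pf] at hc
    have := claim1 (colev c) c rfl hc.2
    omega
  -- the telescoping sum
  have hsum : ∀ k, k ≤ P - 1 →
      (Cset T Pf t (P - 1 + k)).card + k ≤
        ∑ ℓ ∈ Finset.Ico (P - 1) (P - 1 + k), (Gset T Pf t ℓ).card := by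
    intro k
    induction k with
    | zero =>
      intro _
      simpa using Nat.le_of_eq hC0
    | succ m ihm =>
      intro hm
      have hkc := key_count T Pf hP (t := t) (ℓ := P - 1 + m)
        (by omega) (by omega) (claim2 (P - 1 + m + 1) (by omega) (by omega))
      have hsucc : P - 1 + (m + 1) = (P - 1 + m) + 1 := by omega
      rw [hsucc, Finset.sum_Ico_succ_top (by omega : P - 1 ≤ P - 1 + m)]
      have := ihm (by omega)
      omega
  -- conclude: sum of Gset cards over [P-1, 2P-2) is at least P
  have hfinal : P ≤ ∑ ℓ ∈ Finset.Ico (P - 1) (2 * P - 2), (Gset T Pf t ℓ).card := by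
    have h1 := hsum (P - 1) (le_refl _)
    have h2 : P - 1 + (P - 1) = 2 * P - 2 := by omega
    rw [h2] at h1
    have h3 : 1 ≤ (Cset T Pf t (2 * P - 2)).card :=
      Finset.card_pos.mpr (claim2 (2 * P - 2) (by omega) (le_refl _))
    omega
  -- the union of the Gsets
  set U := (Finset.Ico (P - 1) (2 * P - 2)).biUnion (fun ℓ => Gset T Pf t ℓ) with hU
  have hUcard : P ≤ U.card := by
    rw [hU, Finset.card_biUnion]
    · exact hfinal
    · intro x _ y _ hxy
      simp only [Function.onFun, Finset.disjoint_left]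
      intro a ha ha'
      rw [mem_Gset T Pf] at ha ha'
      exact hxy (ha.1 ▸ ha'.1)
  have hUPf : U ⊆ Pf t := by
    intro u hu
    rw [hU, Finset.mem_biUnion] at hu
    obtain ⟨ℓ, -, hu⟩ := hu
    exact Gset_subset_Pf T Pf h0 hroot hins hu
  -- a predecessor p of w
  have hpw : ∃ p, gridE P p w := by
    by_cases hc : 1 ≤ (w.1 : ℕ)
    · exact ⟨downp w, gridE_downp hc⟩
    · refine ⟨leftp w, gridE_leftp ?_⟩
      unfold lev at hwlev
      omega
  obtain ⟨p, hEp⟩ := hpw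
  have hplev : lev p + 1 = P - 1 := by
    have := lev_succ hEp
    omega
  have hpPf : p ∈ Pf t := by
    obtain ⟨hpre, hinsrt⟩ := hins t w hw1 htT hw4 hw5
    rw [hinsrt]
    exact Finset.mem_insert_of_mem (hpre p hEp)
  have hpU : p ∉ U := by
    intro hmem
    rw [hU, Finset.mem_biUnion] at hmem
    obtain ⟨ℓ, hℓ, hmem⟩ := hmem
    rw [mem_Gset T Pf] at hmem
    rw [Finset.mem_Ico] at hℓ
    omega
  -- conclude
  refine ⟨t, htT, ?_⟩
  have hsub : insert p U ⊆ Pf t := by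
    intro x hx
    rcases Finset.mem_insert.mp hx with h | h
    · rwa [h]
    · exact hUPf h
  calc P + 1 ≤ U.card + 1 := by omega
    _ = (insert p U).card := (Finset.card_insert_of_notMem hpU).symm
    _ ≤ (Pf t).card := Finset.card_le_card hsub

end GridProof

/-- For every `P ≥ 2`, every spooky pebbling strategy on the grid DAG
`G◇_P` has pebbling cost at least `P + 1`. -/
theorem grid_spooky_lower (P : ℕ) (hP : 2 ≤ P)
    (Pf Sf : ℕ → Finset (Fin P × Fin P)) (T : ℕ)
    (hstrat : IsSpookyStrategy (gridE P) Pf Sf T) :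
    P + 1 ≤ pebCost Pf T := by
  classical
  obtain ⟨h0, -, hT, -, hsub⟩ := hstrat
  -- the insertion property
  have hins : ∀ t (u : Fin P × Fin P), 1 ≤ t → t ≤ T → u ∈ Pf t → u ∉ Pf (t - 1) →
      (∀ p, gridE P p u → p ∈ Pf (t - 1)) ∧ Pf t = insert u (Pf (t - 1)) := by
    intro t u ht1 ht2 hu hu'
    obtain ⟨v, hcase⟩ := hsub t ht1 ht2
    rcases hcase with ⟨hB, -, hpre⟩ | ⟨hB, -, -⟩ | ⟨hB, -⟩ | ⟨hB, -, hpre⟩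
    · rcases Finset.mem_insert.mp (hB ▸ hu) with h | h
      · subst h; exact ⟨hpre, hB⟩
      · exact absurd h hu'
    · exact absurd (Finset.mem_of_mem_erase (hB ▸ hu)) hu'
    · exact absurd (Finset.mem_of_mem_erase (hB ▸ hu)) hu'
    · rcases Finset.mem_insert.mp (hB ▸ hu) with h | h
      · subst h; exact ⟨hpre, hB⟩
      · exact absurd h hu'
  -- root membership
  have hroot : ∀ u : Fin P × Fin P, GridProof.lev u = 2 * P - 2 → u ∈ Pf T := by
    intro u hu
    rw [hT]
    unfold rootFinset
    rw [Set.Finite.mem_toFinset]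
    intro w hw
    have h1 := u.1.isLt; have h2 := u.2.isLt
    have hw1 := w.1.isLt; have hw2 := w.2.isLt
    unfold GridProof.lev at hu
    rcases hw with ⟨ha, -⟩ | ⟨-, hb⟩
    · omega
    · omega
  obtain ⟨t, htT, hcard⟩ := GridProof.core T Pf h0 hroot hins hP
  calc P + 1 ≤ (Pf t).card := hcard
    _ ≤ pebCost Pf T := Finset.le_sup (f := fun s => (Pf s).card) (Finset.mem_range.mpr (by omega))
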